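/- arXiv:1507.01968 — 2 statements merged into one kernel-verified Lean document; each statement's English description precedes it below -/
import Mathlib

section
/- Let S be a finite group and let L and L' be subgroups of S such that: L and L' are elementwise conjugate in S; L ≠ L'; L and L' are maximal subgroups of S; and the normal core of L in S and the normal core of L' in S are both trivial. Let n be a positive integer and T a transitive subgroup of Sym(Fin n), and form the wreath product G = S ≀ T = (Fin n → S) ⋊ T. Then: (i) L ≀ T and L' ≀ T are elementwise conjugate in G; (ii) the normal core of L ≀ T in G and the normal core of L' ≀ T in G are both trivial; and (iii) L ≀ T and L' ≀ T are maximal subgroups of G. -/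
/-- The coordinate-permutation action of `Equiv.Perm α` on `α → S`:
`(σ • f) i = f (σ⁻¹ i)`. -/
def permMulAut (S : Type*) [Group S] (α : Type*) : Equiv.Perm α →* MulAut (α → S) where
  toFun σ :=
    { toFun := fun f => f ∘ σ.symm
      invFun := fun f => f ∘ σ
      left_inv := fun f => by ext i; simp
      right_inv := fun f => by ext i; simp
      map_mul' := fun f g => rfl }
  map_one' := by ext f i; rfl
  map_mul' := fun σ τ => by ext f i; rfl

/-- The wreath product `S ≀ T` for `T` a subgroup of `Equiv.Perm α`, i.e. the semidirect
product `(α → S) ⋊ T` where `T` permutes coordinates. -/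
def Wreath (S : Type*) [Group S] {α : Type*} (T : Subgroup (Equiv.Perm α)) : Type _ :=
  (α → S) ⋊[(permMulAut S α).comp T.subtype] T

instance (S : Type*) [Group S] {α : Type*} (T : Subgroup (Equiv.Perm α)) :
    Group (Wreath S T) :=
  inferInstanceAs (Group ((α → S) ⋊[(permMulAut S α).comp T.subtype] T))

/-- The subgroup `L ≀ T` of `S ≀ T`: pairs `(f, t)` with all values of `f` in `L`. -/
def wreathSub {S : Type*} [Group S] {α : Type*} (L : Subgroup S)
    (T : Subgroup (Equiv.Perm α)) : Subgroup (Wreath S T) where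
  carrier := {g : (α → S) ⋊[(permMulAut S α).comp T.subtype] T | ∀ i, g.left i ∈ L}
  one_mem' := fun i => by
    show (1 : (α → S) ⋊[(permMulAut S α).comp T.subtype] T).left i ∈ L
    simpa using one_mem L
  mul_mem' := by
    intro a b ha hb i
    show (a * b).left i ∈ L
    exact mul_mem (ha i) (hb _)
  inv_mem' := by
    intro a ha i
    show (a⁻¹).left i ∈ L
    exact inv_mem (ha _)


namespace WreathAux

variable {S : Type*} [Group S] {α : Type*} {T : Subgroup (Equiv.Perm α)}

/-- constructor -/
def wmk (f : α → S) (t : T) : Wreath S T := SemidirectProduct.mk f t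

lemma wmk_mul (f g : α → S) (t u : T) :
    wmk f t * wmk g u = wmk (fun i => f i * g ((t : Equiv.Perm α).symm i)) (t * u) := by
  unfold wmk
  apply SemidirectProduct.ext
  · rfl
  · rfl

lemma wmk_inv (f : α → S) (t : T) :
    (wmk f t)⁻¹ = wmk (fun i => (f ((t : Equiv.Perm α) i))⁻¹) t⁻¹ := by
  unfold wmk
  apply SemidirectProduct.ext
  · rfl
  · rfl

lemma wmk_surj (g : Wreath S T) : g = wmk g.left g.right := rfl

lemma mem_wreathSub {L : Subgroup S} {f : α → S} {t : T} :
    wmk f t ∈ wreathSub L T ↔ ∀ i, f i ∈ L := Iff.rfl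

lemma conj_base (h f : α → S) (t : T) :
    wmk h 1 * wmk f t * (wmk h 1)⁻¹ =
      wmk (fun i => h i * f i * (h ((t : Equiv.Perm α).symm i))⁻¹) t := by
  rw [wmk_inv, wmk_mul, wmk_mul]
  unfold wmk
  apply SemidirectProduct.ext
  · funext i; simp; rfl
  · simp

lemma core_wreath {n : ℕ} (hn : 0 < n) {T : Subgroup (Equiv.Perm (Fin n))}
    (L : Subgroup S) (hL : L ≠ ⊤) (hcore : L.normalCore = ⊥) :
    (wreathSub L T).normalCore = ⊥ := by
  rw [eq_bot_iff]
  intro x hx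
  have hconj : ∀ b : Wreath S T, b * x * b⁻¹ ∈ wreathSub L T := hx
  rw [wmk_surj x] at *
  set f := x.left with hf
  set t := x.right with ht
  have key : ∀ (h : Fin n → S) i,
      h i * f i * (h ((t : Equiv.Perm (Fin n)).symm i))⁻¹ ∈ L := by
    intro h i
    have := hconj (wmk h 1)
    rw [conj_base] at this
    exact this i
  -- t = 1
  have ht1 : (t : Equiv.Perm (Fin n)) = 1 := by
    by_contra hne1
    obtain ⟨i, hi⟩ : ∃ i, (t : Equiv.Perm (Fin n)).symm i ≠ i := by
      by_contra hc
      push_neg at hc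
      apply hne1
      apply Equiv.ext
      intro j
      have h2 := hc ((t : Equiv.Perm (Fin n)) j)
      rw [Equiv.symm_apply_apply] at h2
      simpa using h2.symm
    apply hL
    rw [eq_top_iff]
    intro s _
    have := key (Pi.mulSingle i (s * (f i)⁻¹)) i
    rw [Pi.mulSingle_eq_same, Pi.mulSingle_eq_of_ne hi] at this
    simpa using this
  have hfi : ∀ i, f i = 1 := by
    intro i
    have : f i ∈ L.normalCore := by
      intro b
      have := key (fun _ => b) i
      simpa using this
    rw [hcore] at this
    simpa using this
  have : x = 1 := by
    rw [wmk_surj x]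
    unfold wmk
    apply SemidirectProduct.ext
    · funext i; exact hfi i
    · exact Subtype.ext ht1
  rw [← wmk_surj x, this]
  exact one_mem ⊥

lemma conj_perm (σ : T) (f : α → S) (t : T) :
    wmk 1 σ * wmk f t * (wmk 1 σ)⁻¹ =
      wmk (fun i => f ((σ : Equiv.Perm α).symm i)) (σ * t * σ⁻¹) := by
  rw [wmk_inv, wmk_mul, wmk_mul]
  unfold wmk
  apply SemidirectProduct.ext
  · funext i; simp
  · simp [mul_assoc]

lemma mul_inr_inv (f : α → S) (t : T) :
    wmk f t * (wmk (1 : α → S) t)⁻¹ = wmk f 1 := by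
  rw [wmk_inv, wmk_mul]
  unfold wmk
  apply SemidirectProduct.ext
  · funext i; simp
  · simp

lemma conj_mem_iff {M : Subgroup (Wreath S T)} {c : Wreath S T} (hc : c ∈ M)
    (x : Wreath S T) : c * x * c⁻¹ ∈ M ↔ x ∈ M := by
  constructor
  · intro h
    have := mul_mem (mul_mem (inv_mem hc) h) hc
    group at this
    exact this
  · intro h
    exact mul_mem (mul_mem hc h) (inv_mem hc)

lemma max_wreath {n : ℕ} (hn : 0 < n) {T : Subgroup (Equiv.Perm (Fin n))}
    (hT : ∀ i j : Fin n, ∃ σ ∈ T, σ i = j)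
    (L : Subgroup S) [Finite S] (hmaxL : IsCoatom L) (hnorm : (Subgroup.normalizer (L : Set S)) = L) :
    IsCoatom (wreathSub L T) := by
  obtain ⟨hLtop, hmax⟩ := hmaxL
  constructor
  · intro hcon
    apply hLtop
    rw [eq_top_iff]; intro s _
    have : wmk (fun _ => s) (1 : T) ∈ wreathSub L T := by rw [hcon]; trivial
    exact this ⟨0, hn⟩
  · intro M hM
    set ι : Fin n → S →* Wreath S T := fun i =>
      (SemidirectProduct.inl (φ := (permMulAut S (Fin n)).comp T.subtype)).comp
        (MonoidHom.mulSingle (fun _ : Fin n => S) i) with hι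
    have hιdef : ∀ i s, ι i s = wmk (Pi.mulSingle i s) 1 := fun i s => rfl
    set N : Fin n → Subgroup S := fun i => M.comap (ι i) with hN
    have hLN : ∀ i, L ≤ N i := by
      intro i l hl
      show ι i l ∈ M
      apply le_of_lt hM
      rw [hιdef]
      intro j
      show (Pi.mulSingle i l : Fin n → S) j ∈ L
      rcases eq_or_ne j i with rfl | hji
      · rwa [Pi.mulSingle_eq_same]
      · rw [Pi.mulSingle_eq_of_ne hji]; exact one_mem L
    have hTM : ∀ t : T, wmk 1 t ∈ M := by
      intro t
      apply le_of_lt hM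
      intro i; exact one_mem L
    have hconjι : ∀ (σ : T) i s,
        wmk (1 : Fin n → S) σ * ι i s * (wmk (1 : Fin n → S) σ)⁻¹ =
          ι ((σ : Equiv.Perm (Fin n)) i) s := by
      intro σ i s
      rw [hιdef, hιdef, conj_perm]
      have hfun : (fun j => (Pi.mulSingle i s : Fin n → S) ((σ : Equiv.Perm (Fin n)).symm j)) =
          (Pi.mulSingle ((σ : Equiv.Perm (Fin n)) i) s : Fin n → S) := by
        funext j
        rcases eq_or_ne j ((σ : Equiv.Perm (Fin n)) i) with rfl | hj
        · rw [Equiv.symm_apply_apply, Pi.mulSingle_eq_same, Pi.mulSingle_eq_same]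
        · rw [Pi.mulSingle_eq_of_ne hj, Pi.mulSingle_eq_of_ne]
          intro hcon
          apply hj
          rw [← hcon, Equiv.apply_symm_apply]
      rw [hfun]
      congr 1
      group
    have hNconj : ∀ (σ : T) i, N ((σ : Equiv.Perm (Fin n)) i) = N i := by
      intro σ i
      ext s
      show ι _ s ∈ M ↔ ι i s ∈ M
      rw [← hconjι σ i s]
      exact conj_mem_iff (hTM σ) _
    by_cases htop : ∀ i, N i = ⊤
    · rw [eq_top_iff]
      intro x _
      have hx1 : wmk x.left (1 : T) ∈ M := by
        have h4 : wmk x.left (1 : T) =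
            SemidirectProduct.inl (φ := (permMulAut S (Fin n)).comp T.subtype) x.left := rfl
        rw [h4, ← Finset.noncommProd_mulSingle x.left]; erw [Finset.univ.map_noncommProd]
        apply Subgroup.noncommProd_mem
        intro i _
        have : (x.left i) ∈ N i := by rw [htop i]; trivial
        exact this
      have : x = wmk x.left (1 : T) * wmk 1 x.right := by
        rw [wmk_mul]
        unfold wmk
        apply SemidirectProduct.ext
        · funext i; simp
        · simp
      rw [this]
      exact mul_mem hx1 (hTM _)
    · push_neg at htop
      obtain ⟨i₀, hi₀⟩ := htop
      have hNi₀ : N i₀ = L := by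
        rcases (hLN i₀).lt_or_eq with h | h
        · exact absurd (hmax _ h) hi₀
        · exact h.symm
      have hNall : ∀ i, N i = L := by
        intro i
        obtain ⟨σ, hσT, hσ⟩ := hT i₀ i
        have := hNconj ⟨σ, hσT⟩ i₀
        simp only at this
        rw [hσ] at this
        rw [this, hNi₀]
      exfalso
      apply hM.not_ge
      intro x hxM
      have hbase : wmk x.left (1 : T) ∈ M := by
        have : wmk x.left (1 : T) = x * (wmk (1 : Fin n → S) x.right)⁻¹ := by
          rw [← mul_inr_inv x.left x.right]; rfl
        rw [this]
        exact mul_mem hxM (inv_mem (hTM _))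
      rw [wmk_surj x]
      intro i
      have hc : ∀ l ∈ L, x.left i * l * (x.left i)⁻¹ ∈ L := by
        intro l hl
        have h1 : wmk x.left (1 : T) * ι i l * (wmk x.left (1 : T))⁻¹ ∈ M :=
          (conj_mem_iff hbase _).mpr ((hLN i) hl)
        have h2 : wmk x.left (1 : T) * ι i l * (wmk x.left (1 : T))⁻¹ =
            ι i (x.left i * l * (x.left i)⁻¹) := by
          rw [hιdef, hιdef, conj_base]
          congr 1
          funext j
          rcases eq_or_ne j i with rfl | hj
          · simp [Pi.mulSingle_eq_same]; rfl
          · rw [Pi.mulSingle_eq_of_ne hj, Pi.mulSingle_eq_of_ne hj]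
            simp; exact mul_inv_cancel (x.left j)
        rw [h2] at h1
        have : x.left i * l * (x.left i)⁻¹ ∈ N i := h1
        rwa [hNall i] at this
      have : x.left i ∈ (Subgroup.normalizer (L : Set S)) :=
        Subgroup.mem_normalizer_fintype fun l hl => hc l hl
      rwa [hnorm] at this

section Cyc
open Equiv Equiv.Perm

variable {n : ℕ}

/-- representative of the σ-cycle of `i`. -/
noncomputable def cycRep (σ : Equiv.Perm (Fin n)) (i : Fin n) : Fin n := by
  classical
  exact (Finset.univ.filter (fun j => σ.SameCycle i j)).min'
    ⟨i, by simp [Equiv.Perm.SameCycle.refl]⟩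

lemma cycRep_sameCycle (σ : Equiv.Perm (Fin n)) (i : Fin n) : σ.SameCycle i (cycRep σ i) := by
  classical
  have := (Finset.univ.filter (fun j => σ.SameCycle i j)).min'_mem
    ⟨i, by simp [Equiv.Perm.SameCycle.refl]⟩
  simp only [Finset.mem_filter] at this
  convert this.2 using 2 <;> simp [cycRep]

lemma cycRep_eq_of_sameCycle (σ : Equiv.Perm (Fin n)) {i j : Fin n}
    (h : σ.SameCycle i j) : cycRep σ i = cycRep σ j := by
  classical
  have hst : (Finset.univ.filter (fun k => σ.SameCycle i k)) =
      (Finset.univ.filter (fun k => σ.SameCycle j k)) := by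
    apply Finset.filter_congr
    intro k _
    exact ⟨fun h2 => h.symm.trans h2, fun h2 => h.trans h2⟩
  simp only [cycRep]
  congr 1

lemma cycRep_exists_pow (σ : Equiv.Perm (Fin n)) (i : Fin n) :
    ∃ k : ℕ, (σ ^ k) (cycRep σ i) = i := by
  obtain ⟨k, -, hk⟩ := (cycRep_sameCycle σ i).symm.exists_pow_eq'
  exact ⟨k, hk⟩

/-- partial cycle products `f (σ^k r) * ⋯ * f (σ r)`. -/
def cycProd {S : Type*} [Group S] (σ : Equiv.Perm (Fin n)) (f : Fin n → S) (r : Fin n) :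
    ℕ → S
  | 0 => 1
  | (k+1) => f ((σ ^ (k+1)) r) * cycProd σ f r k

end Cyc

lemma ec_wreath {S : Type*} [Group S] {n : ℕ} {T : Subgroup (Equiv.Perm (Fin n))}
    (L L' : Subgroup S) (h1 : ∀ h ∈ L, ∃ k ∈ L', IsConj h k) :
    ∀ x ∈ wreathSub L T, ∃ x' ∈ wreathSub L' T, IsConj x x' := by
  classical
  intro x hx
  set σ : Equiv.Perm (Fin n) := (x.right : Equiv.Perm (Fin n)) with hσ
  set f : Fin n → S := x.left with hf
  have hfL : ∀ i, f i ∈ L := hx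
  have hsymm : ∀ j, σ.symm j = σ⁻¹ j := fun j => rfl
  set rep : Fin n → Fin n := cycRep σ with hrepdef
  have hex : ∀ i, ∃ k : ℕ, (σ ^ k) (rep i) = i := cycRep_exists_pow σ
  set kk : Fin n → ℕ := fun i => Nat.find (hex i) with hkkdef
  have hkk : ∀ i, (σ ^ kk i) (rep i) = i := fun i => Nat.find_spec (hex i)
  have hrep_inv : ∀ i, rep (σ⁻¹ i) = rep i := by
    intro i
    apply (cycRep_eq_of_sameCycle σ _).symm
    exact (Equiv.Perm.sameCycle_symm_apply_right).mpr (Equiv.Perm.SameCycle.refl σ i)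
  have hrep_fix : ∀ i, rep (rep i) = rep i :=
    fun i => (cycRep_eq_of_sameCycle σ (cycRep_sameCycle σ i)).symm
  have hQL : ∀ r m, cycProd σ f r m ∈ L := by
    intro r m
    induction m with
    | zero => exact one_mem L
    | succ k ih => exact mul_mem (hfL _) ih
  have hex2 : ∀ r, ∃ c : S, c * (f r * cycProd σ f r (kk (σ⁻¹ r))) * c⁻¹ ∈ L' := by
    intro r
    obtain ⟨q, hq, hcj⟩ := h1 _ (mul_mem (hfL r) (hQL r (kk (σ⁻¹ r))))
    obtain ⟨c, hc⟩ := isConj_iff.mp hcj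
    exact ⟨c, hc ▸ hq⟩
  choose A hA using hex2
  set g : Fin n → S := fun i => A (rep i) * (cycProd σ f (rep i) (kk i))⁻¹ with hgdef
  refine ⟨wmk (fun i => g i * f i * (g (σ.symm i))⁻¹) x.right, ?_, ?_⟩
  · intro i
    show g i * f i * (g (σ.symm i))⁻¹ ∈ L'
    rw [hsymm i]
    rcases Nat.eq_zero_or_eq_succ_pred (kk i) with hki | hki
    · -- i is the representative
      have hir : rep i = i := by
        have := hkk i
        rw [hki] at this
        simpa using this
      have hkey : g i * f i * (g (σ⁻¹ i))⁻¹ =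
          A (rep i) * (f (rep i) * cycProd σ f (rep i) (kk (σ⁻¹ (rep i)))) * (A (rep i))⁻¹ := by
        rw [hgdef]
        simp only
        rw [hrep_inv i, hki, hir]
        simp only [cycProd, inv_one, mul_one]
        group
      rw [hkey, hir]
      exact hA i
    · -- i is not the representative
      set m : ℕ := (kk i) - 1 with hm
      have hkim : kk i = m + 1 := hki
      have happ : (σ ^ (m+1)) (rep i) = i := by rw [← hkim]; exact hkk i
      have happ' : (σ ^ m) (rep i) = σ⁻¹ i := by
        have h := hkk i
        rw [hkim, pow_succ', Equiv.Perm.mul_apply] at h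
        have h2 := congrArg (fun z => σ⁻¹ z) h
        simpa using h2
      have hkinv : kk (σ⁻¹ i) = m := by
        have hle : kk (σ⁻¹ i) ≤ m := Nat.find_le (by rw [hrep_inv i]; exact happ')
        have hge : m ≤ kk (σ⁻¹ i) := by
          have h2 : (σ ^ (kk (σ⁻¹ i) + 1)) (rep i) = i := by
            rw [pow_succ']
            have := hkk (σ⁻¹ i)
            rw [hrep_inv i] at this
            rw [Equiv.Perm.mul_apply, this]; simp
          have h3 : kk i ≤ kk (σ⁻¹ i) + 1 := Nat.find_le h2
          omega
        omega
      have hQsucc : cycProd σ f (rep i) (m+1) = f i * cycProd σ f (rep i) m := by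
        show f ((σ ^ (m+1)) (rep i)) * _ = _
        rw [happ]
      have hkey : g i * f i * (g (σ⁻¹ i))⁻¹ = 1 := by
        rw [hgdef]
        simp only
        rw [hrep_inv i, hkinv, hkim, hQsucc]
        group
      rw [hkey]
      exact one_mem L'
  · rw [wmk_surj x]
    apply isConj_iff.mpr
    exact ⟨wmk g 1, conj_base g f x.right⟩

lemma normalizer_eq_self {S : Type*} [Group S] (L L' : Subgroup S)
    (hEC2 : ∀ k ∈ L', ∃ h ∈ L, IsConj k h) (hne : L ≠ L')
    (hmax : IsCoatom L) (hcore : L.normalCore = ⊥) : (Subgroup.normalizer (L : Set S)) = L := by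
  rcases (Subgroup.le_normalizer (H := L)).lt_or_eq with h | h
  · exfalso
    have htop : (Subgroup.normalizer (L : Set S)) = ⊤ := hmax.2 _ h
    have hN : L.Normal := Subgroup.normalizer_eq_top_iff.mp htop
    have hb : L = ⊥ := by rw [← hcore, L.normalCore_eq_self]
    apply hne
    rw [hb]
    symm
    rw [eq_bot_iff]
    intro k hk
    obtain ⟨h', hh', hconj⟩ := hEC2 k hk
    rw [hb, Subgroup.mem_bot] at hh'
    rw [hh'] at hconj
    rw [Subgroup.mem_bot]
    exact isConj_one_left.mp hconj
  · exact h.symm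

end WreathAux

/-- Conservation of properties for Type I triples: if `(S, L, L')` is an EC-triple with
`L ≠ L'`, both `L` and `L'` maximal and with trivial normal core, and `T` is a transitive
subgroup of `Sym(Fin n)`, then `L ≀ T` and `L' ≀ T` are elementwise conjugate in
`G = S ≀ T`, have trivial normal core in `G`, and are maximal subgroups of `G`. -/
theorem wreath_conservation_of_properties {S : Type*} [Group S] [Finite S]
    (L L' : Subgroup S)
    (hEC : (∀ h ∈ L, ∃ k ∈ L', IsConj h k) ∧ (∀ k ∈ L', ∃ h ∈ L, IsConj k h))
    (hne : L ≠ L')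
    (hmaxL : IsCoatom L) (hmaxL' : IsCoatom L')
    (hffL : L.normalCore = ⊥) (hffL' : L'.normalCore = ⊥)
    (n : ℕ) (hn : 0 < n) (T : Subgroup (Equiv.Perm (Fin n)))
    (hT : ∀ i j : Fin n, ∃ σ ∈ T, σ i = j) :
    ((∀ h ∈ wreathSub L T, ∃ h' ∈ wreathSub L' T, IsConj h h') ∧
      (∀ h' ∈ wreathSub L' T, ∃ h ∈ wreathSub L T, IsConj h' h)) ∧
    ((wreathSub L T).normalCore = ⊥ ∧ (wreathSub L' T).normalCore = ⊥) ∧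
    (IsCoatom (wreathSub L T) ∧ IsCoatom (wreathSub L' T)) := by
  have hnormL : (Subgroup.normalizer (L : Set S)) = L :=
    WreathAux.normalizer_eq_self L L' hEC.2 hne hmaxL hffL
  have hnormL' : (Subgroup.normalizer (L' : Set S)) = L' :=
    WreathAux.normalizer_eq_self L' L hEC.1 hne.symm hmaxL' hffL'
  exact ⟨⟨WreathAux.ec_wreath L L' hEC.1, WreathAux.ec_wreath L' L hEC.2⟩,
    ⟨WreathAux.core_wreath hn L hmaxL.1 hffL, WreathAux.core_wreath hn L' hmaxL'.1 hffL'⟩,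
    ⟨WreathAux.max_wreath hn hT L hmaxL hnormL, WreathAux.max_wreath hn hT L' hmaxL' hnormL'⟩⟩
end

section
/- Let S be a finite nonabelian simple group, let n ≥ 2, and let T be a subgroup of Sym(Fin n). Let D = {f : Fin n → S | f is constant} be the diagonal subgroup of the direct power S^(×n) = (Fin n → S); note that D is invariant under the coordinate-permutation action of T. Then every normal subgroup of the wreath product S ≀ T = (Fin n → S) ⋊ T that is contained in the subgroup D ⋊ T = {(f, t) ∈ S ≀ T : f constant} is trivial. -/
/-- The subgroup `D ⋊ T` of the wreath product `S ≀ T`, where `D` is the diagonal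
(constant-function) subgroup of the base group `α → S`. -/
def diagWreathSub (S : Type*) [Group S] {α : Type*} (T : Subgroup (Equiv.Perm α)) :
    Subgroup (Wreath S T) where
  carrier := {g : (α → S) ⋊[(permMulAut S α).comp T.subtype] T |
    ∃ s : S, g.left = fun _ => s}
  one_mem' := ⟨1, rfl⟩
  mul_mem' := by
    rintro a b ⟨s, hs⟩ ⟨t, ht⟩
    refine ⟨s * t, ?_⟩
    show (a * b).left = fun _ => s * t
    exact funext fun i => congrArg₂ (· * ·) (congrFun hs i) (congrFun ht _)
  inv_mem' := by
    rintro a ⟨s, hs⟩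
    refine ⟨s⁻¹, ?_⟩
    show (a⁻¹).left = fun _ => s⁻¹
    exact funext fun i => congrArg (·⁻¹) (congrFun hs _)

private theorem wreath_aux {S : Type*} [Group S]
    [IsSimpleGroup S] (hna : ∃ a b : S, a * b ≠ b * a)
    (n : ℕ) (hn : 2 ≤ n) (T : Subgroup (Equiv.Perm (Fin n)))
    (N : Subgroup ((Fin n → S) ⋊[(permMulAut S (Fin n)).comp T.subtype] T)) (hN : N.Normal)
    (hle : ∀ x ∈ N, ∃ s : S, x.left = fun _ => s) :
    N = ⊥ := by
  classical
  obtain ⟨a0, b0, hab0⟩ := hna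
  have ha0 : a0 ≠ 1 := fun h => hab0 (by simp [h])
  -- any element commuting with everything is 1
  have hcen : ∀ c : S, (∀ a : S, a * c * a⁻¹ = c) → c = 1 := by
    intro c hc
    have hmem : c ∈ Subgroup.center S := by
      rw [Subgroup.mem_center_iff]
      intro g
      calc g * c = (g * c * g⁻¹) * g := by group
        _ = c * g := by rw [hc g]
    rcases IsSimpleGroup.eq_bot_or_eq_top_of_normal (Subgroup.center S) inferInstance with h | h
    · simpa [h] using hmem
    · exact absurd ((Subgroup.mem_center_iff.mp (h.ge (Subgroup.mem_top b0))) a0) hab0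
  let i0 : Fin n := ⟨0, by omega⟩
  let i1 : Fin n := ⟨1, by omega⟩
  have hi01 : i1 ≠ i0 := by simp [i0, i1, Fin.ext_iff]
  -- indicator functions
  let gf : S → Fin n → (Fin n → S) := fun a k j => if j = k then a else 1
  -- elements of N with trivial permutation part are trivial
  have haux : ∀ y ∈ N, y.right = 1 → y = 1 := by
    intro y hy hyr
    obtain ⟨c, hc⟩ := hle y hy
    have hc1 : c = 1 := by
      apply hcen
      intro a
      have hz : (SemidirectProduct.inl (gf a i0)) * y * (SemidirectProduct.inl (gf a i0))⁻¹ ∈ N :=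
        hN.conj_mem y hy _
      obtain ⟨c', hc'⟩ := hle _ hz
      have h0 := congrFun hc' i0
      have h1 := congrFun hc' i1
      simp only [SemidirectProduct.mul_left, SemidirectProduct.inv_left,
        SemidirectProduct.mul_right, SemidirectProduct.inv_right,
        SemidirectProduct.left_inl, SemidirectProduct.right_inl] at h0 h1
      simp [SemidirectProduct.mul_left, SemidirectProduct.inv_left,
        SemidirectProduct.mul_right, SemidirectProduct.inv_right, hyr, hc,
        permMulAut, gf, hi01, Equiv.Perm.one_symm] at h0 h1
      rw [h0, h1]
    apply SemidirectProduct.ext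
    · funext i
      rw [hc]
      simp [hc1]
    · simpa using hyr
  rw [eq_bot_iff]
  intro x hx
  obtain ⟨s, hs⟩ := hle x hx
  set t := x.right with htdef
  have hfix : ∀ i : Fin n, (t : Equiv.Perm (Fin n)) i = i := by
    intro i
    by_contra hne
    set u := SemidirectProduct.inl (φ := (permMulAut S (Fin n)).comp T.subtype) (gf a0 i) with hu
    have hh : u * x * u⁻¹ * x⁻¹ ∈ N := mul_mem (hN.conj_mem x hx u) (inv_mem hx)
    have hr : (u * x * u⁻¹ * x⁻¹).right = 1 := by
      simp [hu]
    have h1 := haux _ hh hr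
    have h2 := congrFun (congrArg SemidirectProduct.left h1) ((t : Equiv.Perm (Fin n)) i)
    simp only [SemidirectProduct.mul_left, SemidirectProduct.inv_left,
      SemidirectProduct.mul_right, SemidirectProduct.inv_right,
        SemidirectProduct.left_inl, SemidirectProduct.right_inl, hu] at h2
    simp [SemidirectProduct.mul_left, SemidirectProduct.inv_left,
      SemidirectProduct.mul_right, SemidirectProduct.inv_right, hs, hu,
      permMulAut, gf, hne, ← htdef, Equiv.Perm.one_symm] at h2
    exact ha0 h2
  have ht1 : t = 1 := Subtype.ext (Equiv.ext hfix)
  rw [Subgroup.mem_bot]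
  exact haux x hx (htdef ▸ ht1)

/-- FF for Type II (diagonal) triples: for `S` a finite nonabelian simple group and
`n ≥ 2`, every normal subgroup of `S ≀ T` contained in `D ⋊ T` (with `D` the diagonal
subgroup of `S^n`) is trivial. -/
theorem normal_le_diagWreathSub_eq_bot {S : Type*} [Group S] [Finite S]
    [IsSimpleGroup S] (hna : ∃ a b : S, a * b ≠ b * a)
    (n : ℕ) (hn : 2 ≤ n) (T : Subgroup (Equiv.Perm (Fin n)))
    (N : Subgroup (Wreath S T)) (hN : N.Normal) (hle : N ≤ diagWreathSub S T) :
    N = ⊥ :=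
  wreath_aux hna n hn T N hN (fun x hx => hle hx)
end
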